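/- For every integer k with 1 ≤ k < n(q-1), the dimension of C_{n,k}^q is strictly less than the dimension of C_{n,k+1}^q. -/

import Mathlib

open scoped BigOperators

/-- A vector in `F^(n+1)` is a standard representative if its leftmost nonzero
coordinate equals `1`. -/
def IsStdRep {F : Type*} [Field F] {n : ℕ} (v : Fin (n + 1) → F) : Prop :=
  ∃ i, (∀ j, j < i → v j = 0) ∧ v i = 1

/-- The set of standard affine representatives of the points of projective n-space. -/
abbrev ProjPts (F : Type*) [Field F] (n : ℕ) : Type _ :=
  {v : Fin (n + 1) → F // IsStdRep v}

noncomputable instance {F : Type*} [Field F] [Fintype F] {n : ℕ} :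
    Fintype (ProjPts F n) := Fintype.ofFinite _

/-- Evaluation of a polynomial at the standard representatives, as a linear map. -/
noncomputable def evalOnPts (F : Type*) [Field F] [Fintype F] (n : ℕ) :
    MvPolynomial (Fin (n + 1)) F →ₗ[F] (ProjPts F n → F) where
  toFun f := fun p => MvPolynomial.eval p.1 f
  map_add' f g := by ext p; simp
  map_smul' c f := by ext p; simp [MvPolynomial.smul_eval]

/-- The projective Reed–Muller code `C_{n,k}^q`: evaluations of homogeneous degree-`k`
polynomials at the standard representatives of the points of `ℙ^n(F)`. -/
noncomputable def PRM (F : Type*) [Field F] [Fintype F] (n k : ℕ) :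
    Submodule F (ProjPts F n → F) :=
  Submodule.map (evalOnPts F n) (MvPolynomial.homogeneousSubmodule (Fin (n + 1)) F k)

/-- The dual code with respect to the standard bilinear form. -/
noncomputable def dualCode {F : Type*} [Field F] [Fintype F] {n : ℕ}
    (C : Submodule F (ProjPts F n → F)) : Submodule F (ProjPts F n → F) where
  carrier := {y | ∀ c ∈ C, ∑ p : ProjPts F n, y p * c p = 0}
  zero_mem' := by intro c hc; simp
  add_mem' := by
    intro a b ha hb c hc
    show ∑ p : ProjPts F n, (a + b) p * c p = 0
    simp only [Pi.add_apply, add_mul, Finset.sum_add_distrib, ha c hc, hb c hc, add_zero]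
  smul_mem' := by
    intro r a ha c hc
    show ∑ p : ProjPts F n, (r • a) p * c p = 0
    simp only [Pi.smul_apply, smul_eq_mul, mul_assoc, ← Finset.mul_sum, ha c hc, mul_zero]

namespace PRMaux

open MvPolynomial

universe u

/-! ### Generalities -/

lemma eval_eq_zero_of_restrictDegree {K : Type u} [Field K] [Fintype K] {m : ℕ}
    (p : MvPolynomial (Fin m) K) (h : ∀ v : Fin m → K, MvPolynomial.eval v p = 0)
    (hp : p ∈ MvPolynomial.restrictDegree (Fin m) K (Fintype.card K - 1)) : p = 0 := by
  classical
  have hinj : Function.Injective (ULift.up.{u} : Fin m → ULift.{u} (Fin m)) :=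
    fun a b hab => congrArg ULift.down hab
  refine MvPolynomial.rename_injective _ hinj ?_
  rw [map_zero]
  refine MvPolynomial.eq_zero_of_eval_eq_zero _ _ _ ?_ ?_
  · intro v; rw [MvPolynomial.eval_rename]; exact h _
  · rw [MvPolynomial.mem_restrictDegree] at hp ⊢
    intro s hs j
    rw [MvPolynomial.support_rename_of_injective hinj] at hs
    obtain ⟨t, ht, rfl⟩ := Finset.mem_image.mp hs
    rw [show j = ULift.up j.down from rfl, Finsupp.mapDomain_apply hinj]
    exact hp t ht j.down

/-- Reduced representative of an exponent modulo `x^q = x`. -/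
def redExp (q e : ℕ) : ℕ := if e = 0 then 0 else (e - 1) % (q - 1) + 1

lemma redExp_le {q : ℕ} (hq : 2 ≤ q) (e : ℕ) : redExp q e ≤ q - 1 := by
  unfold redExp; split
  · omega
  · have := Nat.mod_lt (e - 1) (show 0 < q - 1 by omega); omega

lemma redExp_le_self (q e : ℕ) : redExp q e ≤ e := by
  unfold redExp; split
  · omega
  · have := Nat.mod_le (e - 1) (q - 1); omega

lemma redExp_mod (q e : ℕ) : redExp q e % (q - 1) = e % (q - 1) := by
  unfold redExp; split
  · simp [*]
  · rw [Nat.mod_add_mod]; congr 1; omega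

lemma redExp_eq_zero (q e : ℕ) : redExp q e = 0 ↔ e = 0 := by
  unfold redExp; split <;> omega

lemma pow_eq_pow {F : Type*} [Field F] [Fintype F] (t : F) {a b : ℕ}
    (hmod : a % (Fintype.card F - 1) = b % (Fintype.card F - 1))
    (h0 : a = 0 ↔ b = 0) : t ^ a = t ^ b := by
  rcases eq_or_ne a 0 with ha | ha
  · rw [ha, h0.mp ha]
  have hb : b ≠ 0 := fun hb => ha (h0.mpr hb)
  rcases eq_or_ne t 0 with ht | ht
  · rw [ht, zero_pow ha, zero_pow hb]
  have key : ∀ c : ℕ, t ^ c = t ^ (c % (Fintype.card F - 1)) := by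
    intro c
    conv_lhs => rw [← Nat.mod_add_div c (Fintype.card F - 1)]
    rw [pow_add, pow_mul, FiniteField.pow_card_sub_one_eq_one t ht, one_pow, mul_one]
  rw [key a, key b, hmod]

/-! ### The index set of reduced monomials -/

/-- `i` is the position of the leftmost nonzero entry of `a`. -/
def leadsAt {n : ℕ} (a : Fin (n + 1) → ℕ) (i : Fin (n + 1)) : Prop :=
  (∀ j, j < i → a j = 0) ∧ 1 ≤ a i

lemma leadsAt_unique {n : ℕ} {a : Fin (n + 1) → ℕ} {i i' : Fin (n + 1)}
    (h : leadsAt a i) (h' : leadsAt a i') : i = i' := by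
  rcases lt_trichotomy i i' with hh | hh | hh
  · have := h'.1 i hh; have := h.2; omega
  · exact hh
  · have := h.1 i' hh; have := h'.2; omega

/-- A good exponent vector of degree `d`: leftmost nonzero entry at some `i`,
entries to the right of `i` all at most `q - 1`. -/
def Good (q d : ℕ) {n : ℕ} (a : Fin (n + 1) → ℕ) : Prop :=
  (∑ j, a j) = d ∧ ∃ i, leadsAt a i ∧ ∀ j, i < j → a j ≤ q - 1

/-- The index type of reduced monomials of degree `d`. -/
def Idx (q d n : ℕ) : Type := {a : Fin (n + 1) → ℕ // Good q d a}

lemma Idx.le (q d n : ℕ) (a : Idx q d n) (j : Fin (n + 1)) : a.1 j ≤ d := by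
  calc a.1 j ≤ ∑ j', a.1 j' :=
        Finset.single_le_sum (f := a.1) (fun _ _ => Nat.zero_le _) (Finset.mem_univ j)
    _ = d := a.2.1

instance (q d n : ℕ) : Finite (Idx q d n) := by
  apply Finite.of_injective
    (fun a : Idx q d n => fun j => (⟨a.1 j, Nat.lt_succ_of_le (Idx.le q d n a j)⟩ : Fin (d + 1)))
  intro a b hab
  apply Subtype.ext; funext j
  exact congrArg Fin.val (congrFun hab j)

noncomputable instance (q d n : ℕ) : Fintype (Idx q d n) := Fintype.ofFinite _

/-- The monomial function on the projective points. -/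
def mfun (F : Type*) [Field F] {n : ℕ} (a : Fin (n + 1) → ℕ) : ProjPts F n → F :=
  fun p => ∏ j, p.1 j ^ a j

section Basic
variable {F : Type*} [Field F] [Fintype F] {n : ℕ}

lemma finsupp_degree_eq (s : Fin (n + 1) →₀ ℕ) : s.degree = ∑ j, s j := by
  rw [Finsupp.degree]
  exact Finset.sum_subset (Finset.subset_univ _)
    (fun x _ hx => Finsupp.notMem_support_iff.mp hx)

lemma evalOnPts_monomial (a : Fin (n + 1) → ℕ) (c : F) :
    evalOnPts F n (monomial (Finsupp.equivFunOnFinite.symm a) c) = c • mfun F a := by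
  funext p
  show MvPolynomial.eval p.1 _ = _
  rw [eval_monomial, Finsupp.prod_pow]
  simp [mfun]

lemma mfun_mem_PRM {d : ℕ} (a : Fin (n + 1) → ℕ) (ha : ∑ j, a j = d) :
    mfun F a ∈ PRM F n d := by
  refine ⟨monomial (Finsupp.equivFunOnFinite.symm a) 1, ?_, ?_⟩
  · rw [SetLike.mem_coe, mem_homogeneousSubmodule]
    apply isHomogeneous_monomial
    rw [finsupp_degree_eq]
    simpa using ha
  · rw [evalOnPts_monomial]; simp

/-- Splitting a sum over `Fin (n+1)` at the index `i`. -/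
lemma sum_split (f : Fin (n + 1) → ℕ) (i : Fin (n + 1)) :
    ∑ j, f j = (∑ j ∈ Finset.univ.filter (fun j => j < i), f j) + f i
      + ∑ j ∈ Finset.univ.filter (fun j => i < j), f j := by
  classical
  rw [← Finset.sum_filter_add_sum_filter_not Finset.univ (fun j => j < i) f]
  have h2 : Finset.univ.filter (fun j : Fin (n + 1) => ¬ j < i)
      = insert i (Finset.univ.filter (fun j => i < j)) := by
    ext j
    simp only [Finset.mem_filter, Finset.mem_univ, true_and, Finset.mem_insert, not_lt]
    constructor
    · intro h; rcases eq_or_lt_of_le h with h' | h'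
      · exact Or.inl h'.symm
      · exact Or.inr h'
    · rintro (rfl | h); · exact le_refl _
      · exact le_of_lt h
  rw [h2, Finset.sum_insert (by simp), add_assoc]

end Basic


section Reduce
variable {F : Type*} [Field F] [Fintype F] {n : ℕ}

/-- Every exponent vector of positive degree has a leftmost nonzero entry. -/
lemma exists_lead {k : ℕ} (hk : 1 ≤ k) (s : Fin (n + 1) → ℕ) (hs : ∑ j, s j = k) :
    ∃ i, (∀ j, j < i → s j = 0) ∧ 1 ≤ s i := by
  classical
  have hex : (Finset.univ.filter (fun j => s j ≠ 0)).Nonempty := by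
    by_contra h
    rw [Finset.not_nonempty_iff_eq_empty, Finset.filter_eq_empty_iff] at h
    have : ∑ j, s j = 0 := Finset.sum_eq_zero (fun j hj => by simpa using h hj)
    omega
  set i := (Finset.univ.filter (fun j => s j ≠ 0)).min' hex with hi
  refine ⟨i, ?_, ?_⟩
  · intro j hj
    by_contra hj0
    have : i ≤ j := Finset.min'_le _ _ (by simp [hj0])
    omega
  · have : i ∈ Finset.univ.filter (fun j => s j ≠ 0) := Finset.min'_mem _ _
    simp only [Finset.mem_filter] at this
    omega

lemma reduce_exists {k : ℕ} (hk : 1 ≤ k) (s : Fin (n + 1) → ℕ) (hs : ∑ j, s j = k) :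
    ∃ r : Fin (n + 1) → ℕ, Good (Fintype.card F) k r ∧ mfun F s = mfun F r := by
  classical
  obtain ⟨i, hlt, hi1⟩ := exists_lead hk s hs
  set q := Fintype.card F with hqdef
  have hq : 2 ≤ q := Fintype.one_lt_card
  set S := ∑ j ∈ Finset.univ.filter (fun j => i < j), s j with hSdef
  set R := ∑ j ∈ Finset.univ.filter (fun j => i < j), redExp q (s j) with hRdef
  have hRS : R ≤ S := Finset.sum_le_sum (fun j _ => redExp_le_self q (s j))
  have hsplit := sum_split s i
  have hzero : (∑ j ∈ Finset.univ.filter (fun j => j < i), s j) = 0 :=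
    Finset.sum_eq_zero (fun j hj => hlt j (by simpa using hj))
  have hSk : s i + S = k := by omega
  set r : Fin (n + 1) → ℕ :=
    fun j => if j < i then 0 else if j = i then k - R else redExp q (s j) with hrdef
  have hri : r i = k - R := by simp [hrdef]
  have hrlt : ∀ j, j < i → r j = 0 := fun j hj => by simp [hrdef, hj]
  have hrgt : ∀ j, i < j → r j = redExp q (s j) := by
    intro j hj
    have h1 : ¬ j < i := by omega
    have h2 : j ≠ i := by omega
    simp [hrdef, h1, h2]
  have hrzero : (∑ j ∈ Finset.univ.filter (fun j => j < i), r j) = 0 :=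
    Finset.sum_eq_zero (fun j hj => hrlt j (by simpa using hj))
  have hrR : (∑ j ∈ Finset.univ.filter (fun j => i < j), r j) = R := by
    rw [hRdef]
    exact Finset.sum_congr rfl (fun j hj => hrgt j (by simpa using hj))
  have hrsum : ∑ j, r j = k := by
    rw [sum_split r i, hrzero, hrR, hri]; omega
  have hRmod : R % (q - 1) = S % (q - 1) := by
    rw [hRdef, hSdef, Finset.sum_nat_mod, Finset.sum_congr rfl
      (fun j _ => redExp_mod q (s j)), ← Finset.sum_nat_mod]
  have hrimod : r i % (q - 1) = s i % (q - 1) := by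
    have h1 : (k - R) + R = k := by omega
    have h2 : (k - S) + S = k := by omega
    have hsi : s i = k - S := by omega
    have : Nat.ModEq (q - 1) (k - R) (k - S) :=
      Nat.ModEq.add_right_cancel (c := R) (d := S) hRmod (by rw [h1, h2])
    rw [hri, hsi]; exact this
  refine ⟨r, ⟨hrsum, i, ⟨hrlt, by rw [hri]; omega⟩,
      fun j hj => by rw [hrgt j hj]; exact redExp_le hq _⟩, ?_⟩
  funext p
  refine Finset.prod_congr rfl (fun j _ => ?_)
  rcases lt_trichotomy j i with hj | hj | hj
  · rw [hlt j hj, hrlt j hj]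
  · subst hj
    refine pow_eq_pow (p.1 j) hrimod.symm ?_
    constructor <;> intro h <;> [omega; (rw [hri] at h; omega)]
  · rw [hrgt j hj]
    exact pow_eq_pow (p.1 j) (redExp_mod q (s j)).symm (redExp_eq_zero q (s j)).symm

/-- The spanning inequality: `PRM F n k` lies in the span of reduced monomial functions. -/
lemma PRM_le_span (k : ℕ) (hk : 1 ≤ k) :
    PRM F n k ≤ Submodule.span F
      (Set.range fun a : Idx (Fintype.card F) k n => mfun F a.1) := by
  rintro _ ⟨f, hf, rfl⟩
  rw [← support_sum_monomial_coeff f, map_sum]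
  apply Submodule.sum_mem
  intro s hs
  have hs' : Finsupp.equivFunOnFinite.symm (⇑s) = s := by
    simp
  rw [← hs', evalOnPts_monomial]
  apply Submodule.smul_mem
  have hdeg : ∑ j, s j = k := by
    rw [SetLike.mem_coe, mem_homogeneousSubmodule] at hf
    have h1 := hf (mem_support_iff.mp hs)
    have h2 : s.degree = (Finsupp.weight 1) s := DFunLike.congr_fun Finsupp.degree_eq_weight_one s
    rw [← finsupp_degree_eq, h2]; exact h1
  obtain ⟨r, hr, hsr⟩ := reduce_exists (F := F) hk (⇑s) hdeg
  rw [hsr]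
  exact Submodule.subset_span ⟨⟨r, hr⟩, rfl⟩

end Reduce


section Indep
variable {F : Type*} [Field F] [Fintype F] {n : ℕ}

/-- A point of the `i`-th stratum of projective space. -/
def pt (i : Fin (n + 1)) (w : Fin (n + 1) → F) : ProjPts F n :=
  ⟨fun j => if j < i then 0 else if j = i then 1 else w j,
   ⟨i, fun j hj => if_pos hj, by simp⟩⟩

lemma tail_bound {q d : ℕ} (b : Idx q d n) {i : Fin (n + 1)} (h : leadsAt b.1 i) :
    ∀ j, i < j → b.1 j ≤ q - 1 := by
  obtain ⟨i', h', ht⟩ := b.2.2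
  rwa [leadsAt_unique h' h] at ht

lemma indep (d : ℕ) (hd : 1 ≤ d) :
    LinearIndependent F (fun a : Idx (Fintype.card F) d n => mfun F a.1) := by
  classical
  rw [Fintype.linearIndependent_iff]
  intro g H
  suffices hkey : ∀ m : ℕ, ∀ i : Fin (n + 1), n - i.val < m →
      ∀ a : Idx (Fintype.card F) d n, leadsAt a.1 i → g a = 0 by
    intro a
    obtain ⟨i, hi, -⟩ := a.2.2
    exact hkey (n + 1) i (by omega) a hi
  intro m
  induction m with
  | zero => intro i hi; exact absurd hi (by omega)
  | succ m IH =>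
    intro i hi a hlead
    set T : Finset (Idx (Fintype.card F) d n) :=
      Finset.univ.filter (fun b => leadsAt b.1 i) with hT
    have haT : a ∈ T := by simp only [hT, Finset.mem_filter, Finset.mem_univ, true_and]; exact hlead
    set tl : Idx (Fintype.card F) d n → (Fin (n + 1) →₀ ℕ) :=
      fun b => Finsupp.equivFunOnFinite.symm (fun j => if i < j then b.1 j else 0) with htl
    have htl_app : ∀ b j, (tl b) j = if i < j then b.1 j else 0 := by
      intro b j; simp [htl]
    have tl_inj : ∀ b ∈ T, ∀ b' ∈ T, tl b = tl b' → b = b' := by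
      intro b hb b' hb' h
      simp only [hT, Finset.mem_filter, Finset.mem_univ, true_and] at hb hb'
      have hfun := Finsupp.equivFunOnFinite.symm.injective h
      have hgt : ∀ j, i < j → b.1 j = b'.1 j := by
        intro j hj
        have := congrFun hfun j
        simpa [hj] using this
      apply Subtype.ext; funext j
      rcases lt_trichotomy j i with hj | hj | hj
      · rw [hb.1 j hj, hb'.1 j hj]
      · subst hj
        have hsb := sum_split b.1 j
        have hsb' := sum_split b'.1 j
        have hzb : (∑ l ∈ Finset.univ.filter (fun l => l < j), b.1 l) = 0 :=
          Finset.sum_eq_zero (fun l hl => hb.1 l (by simpa using hl))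
        have hzb' : (∑ l ∈ Finset.univ.filter (fun l => l < j), b'.1 l) = 0 :=
          Finset.sum_eq_zero (fun l hl => hb'.1 l (by simpa using hl))
        have hSeq : (∑ l ∈ Finset.univ.filter (fun l => j < l), b.1 l)
            = ∑ l ∈ Finset.univ.filter (fun l => j < l), b'.1 l :=
          Finset.sum_congr rfl (fun l hl => hgt l (by simpa using hl))
        have h1 := b.2.1
        have h2 := b'.2.1
        omega
      · exact hgt j hj
    set Q : MvPolynomial (Fin (n + 1)) F := ∑ b ∈ T, monomial (tl b) (g b) with hQ
    have hmf : ∀ b ∈ T, ∀ v : Fin (n + 1) → F,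
        (∏ j, v j ^ ((tl b) j)) = mfun F b.1 (pt i v) := by
      intro b hb v
      simp only [hT, Finset.mem_filter, Finset.mem_univ, true_and] at hb
      refine Finset.prod_congr rfl (fun j _ => ?_)
      rcases lt_trichotomy j i with hj | hj | hj
      · have h1 : ¬ i < j := by omega
        have hbj : b.1 j = 0 := hb.1 j hj
        simp [htl_app, pt, h1, hj, hbj]
      · subst hj
        simp [htl_app, pt, lt_irrefl]
      · have h1 : ¬ j < i := by omega
        have h2 : j ≠ i := by omega
        simp [htl_app, pt, hj, h1, h2]
    have hQeval : ∀ v : Fin (n + 1) → F, MvPolynomial.eval v Q = 0 := by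
      intro v
      have hp := congrFun H (pt i v)
      simp only [Finset.sum_apply, Pi.smul_apply, smul_eq_mul, Pi.zero_apply] at hp
      have hsub : ∑ b ∈ T, g b * mfun F b.1 (pt i v)
          = ∑ b : Idx (Fintype.card F) d n, g b * mfun F b.1 (pt i v) := by
        apply Finset.sum_subset (Finset.subset_univ T)
        intro b _ hbT
        simp only [hT, Finset.mem_filter, Finset.mem_univ, true_and] at hbT
        obtain ⟨ib, hlb, htb⟩ := b.2.2
        rcases lt_trichotomy ib i with hib | hib | hib
        · have hz : mfun F b.1 (pt i v) = 0 := by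
            apply Finset.prod_eq_zero (Finset.mem_univ ib)
            have hz0 : (pt i v).1 ib = (0 : F) := by simp [pt, hib]
            rw [hz0]
            exact zero_pow (by have := hlb.2; omega)
          rw [hz, mul_zero]
        · exact absurd (hib ▸ hlb) hbT
        · have hgb : g b = 0 := IH ib (by omega) b hlb
          rw [hgb, zero_mul]
      rw [hQ, map_sum]
      calc ∑ b ∈ T, MvPolynomial.eval v (monomial (tl b) (g b))
          = ∑ b ∈ T, g b * mfun F b.1 (pt i v) := by
            refine Finset.sum_congr rfl (fun b hb => ?_)
            rw [eval_monomial, Finsupp.prod_pow, hmf b hb v]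
        _ = 0 := by rw [hsub]; exact hp
    have hQmem : Q ∈ restrictDegree (Fin (n + 1)) F (Fintype.card F - 1) := by
      rw [hQ]
      apply Submodule.sum_mem
      intro b hb
      rw [mem_restrictDegree]
      intro sfin hsfin j
      rw [support_monomial] at hsfin
      by_cases hg : g b = 0
      · simp [hg] at hsfin
      · rw [if_neg hg, Finset.mem_singleton] at hsfin
        subst hsfin
        rw [htl_app]
        split
        · rename_i hij
          simp only [hT, Finset.mem_filter, Finset.mem_univ, true_and] at hb
          exact tail_bound b hb j hij
        · exact Nat.zero_le _
    have hQ0 : Q = 0 := eval_eq_zero_of_restrictDegree Q hQeval hQmem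
    have hco : MvPolynomial.coeff (tl a) Q = g a := by
      rw [hQ, MvPolynomial.coeff_sum]
      rw [Finset.sum_eq_single_of_mem a haT]
      · rw [coeff_monomial, if_pos rfl]
      · intro b hb hba
        rw [coeff_monomial, if_neg (fun h => hba (tl_inj b hb a haT h))]
    rw [hQ0] at hco
    simpa using hco.symm

end Indep


section Count

lemma minsum (c k : ℕ) : ∀ m : ℕ, ∑ j ∈ Finset.range m, min c (k - j * c) = min k (m * c) := by
  intro m
  induction m with
  | zero => simp
  | succ m IH =>
    rw [Finset.sum_range_succ, IH, Nat.succ_mul]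
    omega

lemma card_lt {n : ℕ} (q k : ℕ) (hq : 2 ≤ q) (hk : 1 ≤ k) (hkn : k ≤ n * (q - 1)) :
    Fintype.card (Idx q k n) < Fintype.card (Idx q (k + 1) n) := by
  classical
  have hli : ∀ a : Idx q k n, ∃ i, leadsAt a.1 i ∧ ∀ j, i < j → a.1 j ≤ q - 1 := fun a => a.2.2
  let li : Idx q k n → Fin (n + 1) := fun a => Classical.choose (hli a)
  have hspec : ∀ a, leadsAt a.1 (li a) ∧ ∀ j, li a < j → a.1 j ≤ q - 1 :=
    fun a => Classical.choose_spec (hli a)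
  have hgood : ∀ a : Idx q k n,
      Good q (k + 1) (fun j => if j = li a then a.1 j + 1 else a.1 j) := by
    intro a
    constructor
    · have : ∀ j, (if j = li a then a.1 j + 1 else a.1 j)
          = a.1 j + (if j = li a then 1 else 0) := by
        intro j; split <;> omega
      rw [Finset.sum_congr rfl (fun j _ => this j), Finset.sum_add_distrib,
        Finset.sum_ite_eq' Finset.univ (li a) (fun _ => 1)]
      simp [a.2.1]
    · refine ⟨li a, ⟨?_, ?_⟩, ?_⟩
      · intro j hj
        show (if j = li a then a.1 j + 1 else a.1 j) = 0
        rw [if_neg (by intro hc; rw [hc] at hj; exact absurd hj (lt_irrefl _))]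
        exact (hspec a).1.1 j hj
      · show 1 ≤ (if li a = li a then a.1 (li a) + 1 else a.1 (li a))
        rw [if_pos rfl]; omega
      · intro j hj
        show (if j = li a then a.1 j + 1 else a.1 j) ≤ q - 1
        rw [if_neg (by intro hc; rw [hc] at hj; exact absurd hj (lt_irrefl _))]
        exact (hspec a).2 j hj
  let φ : Idx q k n → Idx q (k + 1) n :=
    fun a => ⟨fun j => if j = li a then a.1 j + 1 else a.1 j, hgood a⟩
  have hleadφ : ∀ a, leadsAt (φ a).1 (li a) := by
    intro a
    constructor
    · intro j hj
      show (if j = li a then a.1 j + 1 else a.1 j) = 0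
      rw [if_neg (by omega)]
      exact (hspec a).1.1 j hj
    · show 1 ≤ (if li a = li a then a.1 (li a) + 1 else a.1 (li a))
      rw [if_pos rfl]; omega
  have hinj : Function.Injective φ := by
    intro a a' h
    have hfun : ∀ j, (if j = li a then a.1 j + 1 else a.1 j)
        = (if j = li a' then a'.1 j + 1 else a'.1 j) :=
      fun j => congrFun (congrArg Subtype.val h) j
    have hii : li a = li a' := by
      have h1 : leadsAt (φ a).1 (li a') := by
        have := hleadφ a'
        rwa [← h] at this
      exact leadsAt_unique (hleadφ a) h1
    apply Subtype.ext; funext j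
    have := hfun j
    rw [hii] at this
    split at this <;> omega
  have hbgood : Good q (k + 1)
      (fun j : Fin (n + 1) => if j.val = 0 then 1 else min (q - 1) (k - (j.val - 1) * (q - 1))) := by
    constructor
    · rw [Fin.sum_univ_succ]
      have h0 : ((0 : Fin (n + 1)).val = 0) := rfl
      rw [if_pos h0]
      have hterm : ∀ j : Fin n, (if (Fin.succ j).val = 0 then 1
          else min (q - 1) (k - ((Fin.succ j).val - 1) * (q - 1)))
          = min (q - 1) (k - j.val * (q - 1)) := by
        intro j
        rw [if_neg (by simp [Fin.val_succ])]
        simp [Fin.val_succ]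
      rw [Finset.sum_congr rfl (fun j _ => hterm j), Fin.sum_univ_eq_sum_range
        (fun j => min (q - 1) (k - j * (q - 1))) n, minsum (q - 1) k n]
      omega
    · refine ⟨0, ⟨?_, ?_⟩, ?_⟩
      · intro j hj
        exact absurd hj (Fin.not_lt_zero j)
      · simp
      · intro j hj
        have hne : j.val ≠ 0 := by
          intro hc
          have : j = 0 := Fin.ext hc
          rw [this] at hj
          exact absurd hj (lt_irrefl _)
        show (if j.val = 0 then 1 else min (q - 1) (k - (j.val - 1) * (q - 1))) ≤ q - 1
        rw [if_neg hne]
        omega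
  have hnotin : (⟨_, hbgood⟩ : Idx q (k + 1) n) ∉ Set.range φ := by
    rintro ⟨a, ha⟩
    have hlead0 : leadsAt (fun j : Fin (n + 1) =>
        if j.val = 0 then 1 else min (q - 1) (k - (j.val - 1) * (q - 1))) 0 := by
      constructor
      · intro j hj; exact absurd hj (Fin.not_lt_zero j)
      · simp
    have hlead' : leadsAt (φ a).1 (li a) := hleadφ a
    rw [ha] at hlead'
    have h0 : li a = 0 := leadsAt_unique hlead' hlead0
    have hv : (φ a).1 (li a) = a.1 (li a) + 1 := by
      show (if li a = li a then a.1 (li a) + 1 else a.1 (li a)) = a.1 (li a) + 1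
      rw [if_pos rfl]
    rw [ha, h0] at hv
    simp only [Fin.val_zero, if_pos] at hv
    have hge := (hspec a).1.2
    rw [h0] at hge
    omega
  exact Fintype.card_lt_of_injective_of_notMem φ hinj hnotin

end Count

section Final
variable {F : Type*} [Field F] [Fintype F] {n : ℕ}

lemma finrank_PRM_le (k : ℕ) (hk : 1 ≤ k) :
    Module.finrank F (PRM F n k) ≤ Fintype.card (Idx (Fintype.card F) k n) := by
  calc Module.finrank F (PRM F n k)
      ≤ Module.finrank F (Submodule.span F
          (Set.range fun a : Idx (Fintype.card F) k n => mfun F a.1)) :=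
        Submodule.finrank_mono (PRM_le_span k hk)
    _ ≤ Fintype.card (Idx (Fintype.card F) k n) := finrank_range_le_card _

lemma le_finrank_PRM (k : ℕ) (hk : 1 ≤ k) :
    Fintype.card (Idx (Fintype.card F) k n) ≤ Module.finrank F (PRM F n k) := by
  have hind := indep (F := F) (n := n) k hk
  calc Fintype.card (Idx (Fintype.card F) k n)
      = Module.finrank F (Submodule.span F
          (Set.range fun a : Idx (Fintype.card F) k n => mfun F a.1)) :=
        (finrank_span_eq_card hind).symm
    _ ≤ Module.finrank F (PRM F n k) := by
        apply Submodule.finrank_mono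
        rw [Submodule.span_le]
        rintro _ ⟨a, rfl⟩
        exact mfun_mem_PRM a.1 a.2.1

end Final

end PRMaux

theorem stmt3 (q n : ℕ) (F : Type*) [Field F] [Fintype F] [DecidableEq F]
    (hq : Fintype.card F = q) (hn : 1 ≤ n) (k : ℕ) (hk1 : 1 ≤ k) (hk2 : k < n * (q - 1)) :
    Module.finrank F (PRM F n k) < Module.finrank F (PRM F n (k + 1)) := by
  subst hq
  have hq2 : 2 ≤ Fintype.card F := Fintype.one_lt_card
  calc Module.finrank F (PRM F n k)
      ≤ Fintype.card (PRMaux.Idx (Fintype.card F) k n) := PRMaux.finrank_PRM_le k hk1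
    _ < Fintype.card (PRMaux.Idx (Fintype.card F) (k + 1) n) :=
        PRMaux.card_lt _ _ hq2 hk1 (by omega)
    _ ≤ Module.finrank F (PRM F n (k + 1)) := PRMaux.le_finrank_PRM (k + 1) (by omega)
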